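/- Let H be a finite simple graph with |E(H)| = 2|V(H)| - 2 that is rigid but not redundantly rigid (i.e., there is an edge e such that H - e is not rigid). Then H has a proper subgraph H₁ that is rigid and satisfies |E(H₁)| = 2|V(H₁)| - 2. -/

import Mathlib

/-- A subgraph `A` of `H` is minimally rigid in the Geiringer–Laman counting sense:
`|E(A)| = 2|V(A)| - 3` and every subgraph `B ≤ A` with at least two vertices
satisfies `|E(B)| ≤ 2|V(B)| - 3`. -/
def SubMinRigid {V : Type*} {H : SimpleGraph V} (A : H.Subgraph) : Prop :=
  A.edgeSet.ncard = 2 * A.verts.ncard - 3 ∧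
    ∀ B : H.Subgraph, B ≤ A → 2 ≤ B.verts.ncard →
      B.edgeSet.ncard ≤ 2 * B.verts.ncard - 3

/-- A subgraph is rigid if it contains a spanning minimally rigid subgraph. -/
def SubRigid {V : Type*} {H : SimpleGraph V} (A : H.Subgraph) : Prop :=
  ∃ B : H.Subgraph, B ≤ A ∧ B.verts = A.verts ∧ SubMinRigid B

section Aux

variable {V : Type*} {H : SimpleGraph V}

lemma aux_le_of_subsets {A C : H.Subgraph} (hv : A.verts ⊆ C.verts)
    (he : A.edgeSet ⊆ C.edgeSet) : A ≤ C := by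
  refine ⟨hv, fun a b hab => ?_⟩
  exact SimpleGraph.Subgraph.mem_edgeSet.mp (he (SimpleGraph.Subgraph.mem_edgeSet.mpr hab))

lemma aux_edgeSet_deleteEdges (A : H.Subgraph) (s : Set (Sym2 V)) :
    (A.deleteEdges s).edgeSet = A.edgeSet \ s := by
  ext x
  induction x using Sym2.ind with
  | _ a b =>
    simp [SimpleGraph.Subgraph.mem_edgeSet, SimpleGraph.Subgraph.deleteEdges_adj]

end Aux

theorem stmt_9 (V : Type*) [Fintype V] (H : SimpleGraph V)
    (hcount : H.edgeSet.ncard = 2 * Fintype.card V - 2)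
    (hrigid : SubRigid (⊤ : H.Subgraph))
    (hnotred : ∃ e ∈ H.edgeSet, ¬ SubRigid ((⊤ : H.Subgraph).deleteEdges {e})) :
    ∃ H₁ : H.Subgraph, H₁ ≠ ⊤ ∧ SubRigid H₁ ∧
      H₁.edgeSet.ncard = 2 * H₁.verts.ncard - 2 := by
  classical
  have hVfin : Finite V := Finite.of_fintype V
  have hSym2fin : Finite (Sym2 V) := by infer_instance
  obtain ⟨e, heH, hne⟩ := hnotred
  obtain ⟨B, hBle, hBverts, hBcount, hBlaman⟩ := hrigid
  rw [SimpleGraph.Subgraph.verts_top] at hBverts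
  set n := Fintype.card V with hn_def
  have hn : B.verts.ncard = n := by
    rw [hBverts, Set.ncard_univ, Nat.card_eq_fintype_card]
  rw [hn] at hBcount
  -- n ≥ 2
  have hn2 : 2 ≤ n := by
    have h1 : 0 < H.edgeSet.ncard := by
      rw [Set.ncard_pos (Set.toFinite _)]
      exact ⟨e, heH⟩
    omega
  have hBC3 : B.edgeSet.ncard + 3 = 2 * n := by omega
  -- the extra edge e₀
  have hBE : B.edgeSet ⊆ H.edgeSet := by
    have := SimpleGraph.Subgraph.edgeSet_mono hBle
    rwa [SimpleGraph.Subgraph.edgeSet_top] at this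
  have hBEne : B.edgeSet ≠ H.edgeSet := by
    intro h
    rw [h, hcount] at hBC3
    omega
  obtain ⟨e₀, he₀H, he₀B⟩ := Set.exists_of_ssubset (HasSubset.Subset.ssubset_of_ne hBE hBEne)
  revert he₀H he₀B
  induction e₀ using Sym2.ind with
  | _ u v =>
  intro he₀H he₀B
  have huv : H.Adj u v := H.mem_edgeSet.mp he₀H
  have hune : u ≠ v := huv.ne
  -- the family of tight subgraphs of B containing u and v
  set S : Set H.Subgraph :=
    {A | A ≤ B ∧ u ∈ A.verts ∧ v ∈ A.verts ∧ A.edgeSet.ncard + 3 = 2 * A.verts.ncard}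
    with hS_def
  have hBS : B ∈ S := by
    refine ⟨le_refl _, ?_, ?_, by rw [hn]; exact hBC3⟩ <;> · rw [hBverts]; trivial
  have two_le : ∀ A : H.Subgraph, u ∈ A.verts → v ∈ A.verts → 2 ≤ A.verts.ncard := by
    intro A hu hv
    have := (Set.one_lt_ncard (Set.toFinite _)).mpr ⟨u, hu, v, hv, hune⟩
    omega
  have laman : ∀ C : H.Subgraph, C ≤ B → 2 ≤ C.verts.ncard →
      C.edgeSet.ncard + 3 ≤ 2 * C.verts.ncard := by
    intro C hC h2
    have := hBlaman C hC h2
    omega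
  -- S is closed under intersection
  have inter_mem : ∀ A₁ ∈ S, ∀ A₂ ∈ S, A₁ ⊓ A₂ ∈ S := by
    intro A₁ h₁ A₂ h₂
    obtain ⟨h₁B, h₁u, h₁v, h₁c⟩ := h₁
    obtain ⟨h₂B, h₂u, h₂v, h₂c⟩ := h₂
    have hVsum : (A₁.verts ∪ A₂.verts).ncard + (A₁.verts ∩ A₂.verts).ncard
        = A₁.verts.ncard + A₂.verts.ncard :=
      Set.ncard_union_add_ncard_inter _ _ (Set.toFinite _) (Set.toFinite _)
    have hEsum : (A₁.edgeSet ∪ A₂.edgeSet).ncard + (A₁.edgeSet ∩ A₂.edgeSet).ncard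
        = A₁.edgeSet.ncard + A₂.edgeSet.ncard :=
      Set.ncard_union_add_ncard_inter _ _ (Set.toFinite _) (Set.toFinite _)
    have hsupV : (A₁ ⊔ A₂).verts = A₁.verts ∪ A₂.verts := rfl
    have hinfV : (A₁ ⊓ A₂).verts = A₁.verts ∩ A₂.verts := rfl
    have hsupE : (A₁ ⊔ A₂).edgeSet = A₁.edgeSet ∪ A₂.edgeSet :=
      SimpleGraph.Subgraph.edgeSet_sup
    have hinfE : (A₁ ⊓ A₂).edgeSet = A₁.edgeSet ∩ A₂.edgeSet :=
      SimpleGraph.Subgraph.edgeSet_inf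
    have hsup2 : 2 ≤ (A₁ ⊔ A₂).verts.ncard :=
      two_le _ (Or.inl h₁u) (Or.inl h₁v)
    have hinf2 : 2 ≤ (A₁ ⊓ A₂).verts.ncard :=
      two_le _ ⟨h₁u, h₂u⟩ ⟨h₁v, h₂v⟩
    have hsupL := laman (A₁ ⊔ A₂) (sup_le h₁B h₂B) hsup2
    have hinfL := laman (A₁ ⊓ A₂) (le_trans inf_le_left h₁B) hinf2
    rw [hsupE, hsupV] at hsupL
    rw [hinfE, hinfV] at hinfL
    refine ⟨le_trans inf_le_left h₁B, ⟨h₁u, h₂u⟩, ⟨h₁v, h₂v⟩, ?_⟩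
    rw [hinfE, hinfV]
    omega
  -- choose a minimal member of S
  set μ : H.Subgraph → ℕ := fun A => A.verts.ncard + A.edgeSet.ncard with hμ_def
  obtain ⟨m, ⟨A₀, hA₀S, hA₀m⟩, hmmin⟩ :=
    Nat.lt_wfRel.wf.has_min {m | ∃ A ∈ S, μ A = m} ⟨μ B, B, hBS, rfl⟩
  have hA₀min : ∀ A' ∈ S, μ A₀ ≤ μ A' := by
    intro A' hA'
    have := hmmin (μ A') ⟨A', hA', rfl⟩
    rw [hA₀m]
    exact not_lt.mp this
  -- A₀ is below every member of S
  have hA₀le : ∀ C ∈ S, A₀ ≤ C := by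
    intro C hC
    have hi := inter_mem A₀ hA₀S C hC
    have hμi := hA₀min _ hi
    have hvsub : (A₀ ⊓ C).verts ⊆ A₀.verts := Set.inter_subset_left
    have hesub : (A₀ ⊓ C).edgeSet ⊆ A₀.edgeSet := by
      rw [SimpleGraph.Subgraph.edgeSet_inf]; exact Set.inter_subset_left
    have hv1 : (A₀ ⊓ C).verts.ncard ≤ A₀.verts.ncard :=
      Set.ncard_le_ncard hvsub (Set.toFinite _)
    have he1 : (A₀ ⊓ C).edgeSet.ncard ≤ A₀.edgeSet.ncard :=
      Set.ncard_le_ncard hesub (Set.toFinite _)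
    have hveq : (A₀ ⊓ C).verts = A₀.verts := by
      apply Set.eq_of_subset_of_ncard_le hvsub ?_ (Set.toFinite _)
      simp only [hμ_def] at hμi; omega
    have heeq : (A₀ ⊓ C).edgeSet = A₀.edgeSet := by
      apply Set.eq_of_subset_of_ncard_le hesub ?_ (Set.toFinite _)
      simp only [hμ_def] at hμi; omega
    refine aux_le_of_subsets ?_ ?_
    · rw [← hveq]; exact Set.inter_subset_right
    · rw [← heeq, SimpleGraph.Subgraph.edgeSet_inf]; exact Set.inter_subset_right
  obtain ⟨hA₀B, hA₀u, hA₀v, hA₀c⟩ := hA₀S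
  have hA₀2 : 2 ≤ A₀.verts.ncard := two_le _ hA₀u hA₀v
  -- e ≠ s(u,v), since H minus s(u,v) is rigid (it contains B)
  have hene₀ : e ≠ s(u, v) := by
    intro h
    apply hne
    subst h
    refine ⟨B, ?_, ?_, hBcount.trans (by rw [hn]), hBlaman⟩
    · refine aux_le_of_subsets ?_ ?_
      · rw [SimpleGraph.Subgraph.deleteEdges_verts, SimpleGraph.Subgraph.verts_top, hBverts]
      · rw [aux_edgeSet_deleteEdges, SimpleGraph.Subgraph.edgeSet_top]
        intro x hx
        refine ⟨hBE hx, ?_⟩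
        simp only [Set.mem_singleton_iff]
        rintro rfl
        exact he₀B hx
    · rw [SimpleGraph.Subgraph.deleteEdges_verts, SimpleGraph.Subgraph.verts_top, hBverts]
  -- key claim : e is not an edge of A₀
  have heA₀ : e ∉ A₀.edgeSet := by
    intro heA
    apply hne
    have heB : e ∈ B.edgeSet := SimpleGraph.Subgraph.edgeSet_mono hA₀B heA
    set K := H.subgraphOfAdj huv with hK_def
    have hKE : K.edgeSet = {s(u, v)} := SimpleGraph.edgeSet_subgraphOfAdj huv
    set B'' := (B.deleteEdges {e}) ⊔ K with hB''_def
    have hB''E : B''.edgeSet = insert s(u, v) (B.edgeSet \ {e}) := by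
      rw [hB''_def, SimpleGraph.Subgraph.edgeSet_sup, aux_edgeSet_deleteEdges, hKE,
        Set.union_singleton]
    have hB''V : B''.verts = Set.univ := by
      have : B''.verts = (B.deleteEdges {e}).verts ∪ K.verts := rfl
      rw [this, SimpleGraph.Subgraph.deleteEdges_verts, hBverts, Set.univ_union]
    have he₀notmem : s(u, v) ∉ B.edgeSet \ {e} := fun h' => he₀B h'.1
    have hdiffcard : (B.edgeSet \ {e}).ncard = B.edgeSet.ncard - 1 :=
      Set.ncard_diff_singleton_of_mem heB
    have hB''count : B''.edgeSet.ncard + 3 = 2 * n := by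
      rw [hB''E, Set.ncard_insert_of_notMem he₀notmem (Set.toFinite _), hdiffcard]
      have hpos : 0 < B.edgeSet.ncard := by omega
      omega
    have hB''Vcard : B''.verts.ncard = n := by
      rw [hB''V, Set.ncard_univ, Nat.card_eq_fintype_card]
    refine ⟨B'', ?_, ?_, ?_, ?_⟩
    · refine aux_le_of_subsets ?_ ?_
      · rw [hB''V, SimpleGraph.Subgraph.deleteEdges_verts, SimpleGraph.Subgraph.verts_top]
      · rw [hB''E, aux_edgeSet_deleteEdges, SimpleGraph.Subgraph.edgeSet_top]
        intro x hx
        rcases hx with rfl | ⟨hxB, hxe⟩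
        · exact ⟨he₀H, by simpa using (Ne.symm hene₀)⟩
        · exact ⟨hBE hxB, hxe⟩
    · rw [hB''V, SimpleGraph.Subgraph.deleteEdges_verts, SimpleGraph.Subgraph.verts_top]
    · rw [hB''Vcard]; omega
    · -- Laman condition for B''
      intro C hC h2
      have hCV : C.verts ⊆ Set.univ := Set.subset_univ _
      have hCE : C.edgeSet ⊆ insert s(u, v) (B.edgeSet \ {e}) := by
        rw [← hB''E]; exact SimpleGraph.Subgraph.edgeSet_mono hC
      by_cases hC₀ : s(u, v) ∈ C.edgeSet
      · set C' := C.deleteEdges {s(u, v)} with hC'_def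
        have hC'V : C'.verts = C.verts := SimpleGraph.Subgraph.deleteEdges_verts _
        have hC'E : C'.edgeSet = C.edgeSet \ {s(u, v)} := aux_edgeSet_deleteEdges _ _
        have hC'B : C' ≤ B := by
          refine aux_le_of_subsets ?_ ?_
          · rw [hC'V, hBverts]; exact Set.subset_univ _
          · rw [hC'E]
            intro x hx
            rcases hCE hx.1 with rfl | ⟨hxB, _⟩
            · exact absurd rfl hx.2
            · exact hxB
        have hC'card : C'.edgeSet.ncard = C.edgeSet.ncard - 1 := by
          rw [hC'E]; exact Set.ncard_diff_singleton_of_mem hC₀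
        have hCpos : 0 < C.edgeSet.ncard := by
          rw [Set.ncard_pos (Set.toFinite _)]; exact ⟨_, hC₀⟩
        have h2' : 2 ≤ C'.verts.ncard := by rw [hC'V]; exact h2
        have hL := laman C' hC'B h2'
        rw [hC'V, hC'card] at hL
        by_contra hgoal
        push_neg at hgoal
        -- then C' is a tight subgraph containing u, v, so A₀ ≤ C', contradiction
        have huC : u ∈ C.verts := C.edge_vert (SimpleGraph.Subgraph.mem_edgeSet.mp hC₀)
        have hvC : v ∈ C.verts :=
          C.edge_vert (C.symm.symm _ _ (SimpleGraph.Subgraph.mem_edgeSet.mp hC₀))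
        have hC'S : C' ∈ S := by
          refine ⟨hC'B, by rw [hC'V]; exact huC, by rw [hC'V]; exact hvC, ?_⟩
          rw [hC'V, hC'card]
          omega
        have : e ∈ C'.edgeSet := SimpleGraph.Subgraph.edgeSet_mono (hA₀le C' hC'S) heA
        rw [hC'E] at this
        rcases hCE this.1 with h' | ⟨_, hxe⟩
        · exact hene₀ h'
        · exact hxe rfl
      · -- C ≤ B directly
        have hCB : C ≤ B := by
          refine aux_le_of_subsets (by rw [hBverts]; exact Set.subset_univ _) ?_
          intro x hx
          rcases hCE hx with rfl | ⟨hxB, _⟩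
          · exact absurd hx hC₀
          · exact hxB
        exact hBlaman C hCB h2
  -- construct H₁
  set K := H.subgraphOfAdj huv with hK_def
  have hKE : K.edgeSet = {s(u, v)} := SimpleGraph.edgeSet_subgraphOfAdj huv
  refine ⟨A₀ ⊔ K, ?_, ?_, ?_⟩
  · -- not ⊤, since e is not an edge
    intro h
    have : e ∈ (A₀ ⊔ K).edgeSet := by
      rw [h, SimpleGraph.Subgraph.edgeSet_top]; exact heH
    rw [SimpleGraph.Subgraph.edgeSet_sup, hKE] at this
    rcases this with h' | h'
    · exact heA₀ h'
    · exact hene₀ h'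
  · refine ⟨A₀, le_sup_left, ?_, ?_, ?_⟩
    · have hKsub : K.verts ⊆ A₀.verts := by
        intro x hx
        rcases hx with rfl | rfl
        · exact hA₀u
        · exact hA₀v
      show A₀.verts = A₀.verts ∪ K.verts
      rw [Set.union_eq_self_of_subset_right hKsub]
    · omega
    · exact fun B' hB' h2 => hBlaman B' (le_trans hB' hA₀B) h2
  · have hvertseq : (A₀ ⊔ K).verts = A₀.verts := by
      have hKsub : K.verts ⊆ A₀.verts := by
        intro x hx
        rcases hx with rfl | rfl
        · exact hA₀u
        · exact hA₀v
      show A₀.verts ∪ K.verts = A₀.verts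
      rw [Set.union_eq_self_of_subset_right hKsub]
    have he₀A₀ : s(u, v) ∉ A₀.edgeSet := fun h =>
      he₀B (SimpleGraph.Subgraph.edgeSet_mono hA₀B h)
    have : (A₀ ⊔ K).edgeSet = insert s(u, v) A₀.edgeSet := by
      rw [SimpleGraph.Subgraph.edgeSet_sup, hKE, Set.union_singleton]
    rw [this, hvertseq, Set.ncard_insert_of_notMem he₀A₀ (Set.toFinite _)]
    omega
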